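/- Let X be a (75,32,10,16) strongly regular graph in which every vertex outside any 5-clique has exactly two neighbors in it. Let K5 = {k1,...,k5} be a 5-clique, and let T ⊆ X_{i,j}, T' ⊆ X_{k,l} be triangles in distinct parts (where X_{a,b} is the set of vertices adjacent exactly to k_a,k_b on K5). If |{i,j,k,l}| = 3 then the edges between T and T' form a perfect matching; if |{i,j,k,l}| = 4 then they form the complement of a perfect matching (i.e., each vertex of T is adjacent to exactly 2 vertices of T'). -/
import Mathlib


open Finset

/-- The number of neighbors of `x` inside the vertex set `K`. -/
def nbrs {V : Type*} [DecidableEq V] (G : SimpleGraph V) [DecidableRel G.Adj]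
    (K : Finset V) (x : V) : ℕ :=
  (K.filter (fun y => G.Adj x y)).card

/-- The number of vertices outside `K` with exactly `i` neighbors in `K`. -/
def bcount {V : Type*} [Fintype V] [DecidableEq V] (G : SimpleGraph V) [DecidableRel G.Adj]
    (K : Finset V) (i : ℕ) : ℕ :=
  ((univ \ K).filter (fun x => nbrs G K x = i)).card


lemma aux13 {V : Type*} [Fintype V] [DecidableEq V]
    (G : SimpleGraph V) [DecidableRel G.Adj]
    (h5 : ∀ C : Finset V, G.IsNClique 5 C → ∀ x ∉ C, nbrs G C x = 2)
    (K : Finset V) (hK : G.IsNClique 5 K)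
    (a b c d : V) (hab : a ≠ b)
    (hne : ({a, b} : Finset V) ≠ {c, d})
    (T : Finset V) (hT : G.IsNClique 3 T)
    (hTX : ∀ x ∈ T, x ∉ K ∧ K.filter (fun y => G.Adj x y) = {a, b})
    (y : V) (hyK : y ∉ K) (hy : K.filter (fun z => G.Adj y z) = {c, d}) :
    (T.filter (fun x => G.Adj x y)).card + (({a, b} ∩ {c, d} : Finset V)).card = 2 := by
  obtain ⟨x₀, hx₀⟩ := Finset.card_pos.mp (by rw [hT.2]; norm_num : 0 < T.card)
  have hfilt := (hTX x₀ hx₀).2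
  have haK : a ∈ K := (Finset.mem_filter.mp (hfilt ▸ (by simp : a ∈ ({a, b} : Finset V)))).1
  have hbK : b ∈ K := (Finset.mem_filter.mp (hfilt ▸ (by simp : b ∈ ({a, b} : Finset V)))).1
  have hadj : ∀ x ∈ T, G.Adj x a ∧ G.Adj x b := by
    intro x hx
    have h := (hTX x hx).2
    exact ⟨(Finset.mem_filter.mp (h ▸ (by simp : a ∈ ({a, b} : Finset V)))).2,
      (Finset.mem_filter.mp (h ▸ (by simp : b ∈ ({a, b} : Finset V)))).2⟩
  have haT : a ∉ T := fun h => (hTX a h).1 haK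
  have hbT : b ∉ T := fun h => (hTX b h).1 hbK
  have hdisj : Disjoint ({a, b} : Finset V) T := by
    rw [Finset.disjoint_left]
    intro z hz
    simp only [Finset.mem_insert, Finset.mem_singleton] at hz
    rcases hz with rfl | rfl
    · exact haT
    · exact hbT
  have hC : G.IsNClique 5 (({a, b} : Finset V) ∪ T) := by
    constructor
    · intro u hu v hv huv
      simp only [Finset.coe_union, Set.mem_union, Finset.coe_insert, Set.mem_insert_iff,
        Finset.coe_singleton, Set.mem_singleton_iff, Finset.mem_coe] at hu hv
      rcases hu with (rfl | rfl) | hu <;> rcases hv with (rfl | rfl) | hv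
      · exact absurd rfl huv
      · exact hK.1 haK hbK huv
      · exact ((hadj v hv).1).symm
      · exact hK.1 hbK haK huv
      · exact absurd rfl huv
      · exact ((hadj v hv).2).symm
      · exact (hadj u hu).1
      · exact (hadj u hu).2
      · exact hT.1 hu hv huv
    · rw [Finset.card_union_of_disjoint hdisj, hT.2]
      simp [hab]
  have hyC : y ∉ (({a, b} : Finset V) ∪ T) := by
    intro h
    rcases Finset.mem_union.mp h with h | h
    · simp only [Finset.mem_insert, Finset.mem_singleton] at h
      rcases h with rfl | rfl
      · exact hyK haK
      · exact hyK hbK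
    · have := (hTX y h).2
      have heq : ({a, b} : Finset V) = {c, d} := by rw [← this, ← hy]
      exact hne heq
  have h2 := h5 _ hC y hyC
  unfold nbrs at h2
  rw [Finset.filter_union, Finset.card_union_of_disjoint
    (Finset.disjoint_filter_filter hdisj)] at h2
  have e1 : ({a, b} : Finset V).filter (fun z => G.Adj y z) = {a, b} ∩ {c, d} := by
    ext z
    simp only [Finset.mem_filter, Finset.mem_inter]
    refine and_congr_right fun hz => ?_
    have hzK : z ∈ K := by
      simp only [Finset.mem_insert, Finset.mem_singleton] at hz
      rcases hz with rfl | rfl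
      · exact haK
      · exact hbK
    constructor
    · intro hadj'
      rw [← hy]
      exact Finset.mem_filter.mpr ⟨hzK, hadj'⟩
    · intro hz'
      rw [← hy] at hz'
      exact (Finset.mem_filter.mp hz').2
  have e2 : T.filter (fun z => G.Adj y z) = T.filter (fun x => G.Adj x y) := by
    apply Finset.filter_congr
    intro x hx
    simp [G.adj_comm]
  rw [e1, e2] at h2
  omega

/-- Two triangles `T ⊆ X_{a,b}` and `T' ⊆ X_{c,d}` in distinct parts of the
partition induced by a 5-clique: if `|{a,b,c,d}| = 3` the edges between `T`
and `T'` form a perfect matching; if `|{a,b,c,d}| = 4` they form the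
complement of a perfect matching. -/
theorem stmt13 {V : Type*} [Fintype V] [DecidableEq V]
    (G : SimpleGraph V) [DecidableRel G.Adj]
    (hG : G.IsSRGWith 75 32 10 16)
    (h5 : ∀ C : Finset V, G.IsNClique 5 C → ∀ x ∉ C, nbrs G C x = 2)
    (K : Finset V) (hK : G.IsNClique 5 K)
    (a b c d : V) (ha : a ∈ K) (hb : b ∈ K) (hc : c ∈ K) (hd : d ∈ K)
    (hab : a ≠ b) (hcd : c ≠ d)
    (hdistinct : ({a, b} : Finset V) ≠ {c, d})
    (T T' : Finset V) (hT : G.IsNClique 3 T) (hT' : G.IsNClique 3 T')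
    (hTX : ∀ x ∈ T, x ∉ K ∧ K.filter (fun y => G.Adj x y) = {a, b})
    (hT'X : ∀ x ∈ T', x ∉ K ∧ K.filter (fun y => G.Adj x y) = {c, d}) :
    (({a, b, c, d} : Finset V).card = 3 →
      (∀ x ∈ T, (T'.filter (fun y => G.Adj x y)).card = 1) ∧
      (∀ y ∈ T', (T.filter (fun x => G.Adj x y)).card = 1)) ∧
    (({a, b, c, d} : Finset V).card = 4 →
      (∀ x ∈ T, (T'.filter (fun y => G.Adj x y)).card = 2) ∧
      (∀ y ∈ T', (T.filter (fun x => G.Adj x y)).card = 2)) := by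
  have hunion : ({a, b, c, d} : Finset V) = ({a, b} : Finset V) ∪ {c, d} := by
    ext z; simp only [Finset.mem_insert, Finset.mem_singleton, Finset.mem_union]; tauto
  have hie : (({a, b} : Finset V) ∪ {c, d}).card + (({a, b} : Finset V) ∩ {c, d}).card = 4 := by
    rw [Finset.card_union_add_card_inter]
    simp [hab, hcd]
  have key : ∀ n, ({a, b, c, d} : Finset V).card = n →
      (∀ x ∈ T, (T'.filter (fun y => G.Adj x y)).card = n - 2) ∧
      (∀ y ∈ T', (T.filter (fun x => G.Adj x y)).card = n - 2) := by
    intro n hn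
    rw [hunion] at hn
    have hint : (({a, b} : Finset V) ∩ {c, d}).card = 4 - n := by omega
    constructor
    · intro x hx
      have h := aux13 G h5 K hK c d a b hcd (Ne.symm hdistinct) T' hT' hT'X x
        (hTX x hx).1 (hTX x hx).2
      have e1 : T'.filter (fun z => G.Adj z x) = T'.filter (fun y => G.Adj x y) := by
        apply Finset.filter_congr; intro z hz; simp [G.adj_comm]
      rw [e1, Finset.inter_comm, hint] at h
      have hn4 : n ≤ 4 := by
        have := Finset.card_le_card (Finset.subset_union_left (s₁ := ({a,b} : Finset V))
          (s₂ := ({c,d} : Finset V)))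
        omega
      omega
    · intro y hy
      have h := aux13 G h5 K hK a b c d hab hdistinct T hT hTX y
        (hT'X y hy).1 (hT'X y hy).2
      have hn4 : n ≤ 4 := by
        have := Finset.card_le_card (Finset.subset_union_left (s₁ := ({a,b} : Finset V))
          (s₂ := ({c,d} : Finset V)))
        omega
      rw [hint] at h
      omega
  exact ⟨fun h3 => key 3 h3, fun h4 => key 4 h4⟩
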